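/- Let G be a tree of order m ≥ 3 and n > 1. Then χ_ld(G[\overline{K_n}]) = 2 if and only if G is a star K_{1,m-1}. -/

import Mathlib

open Finset

open Classical in
/-- The weight of a vertex: sum of labels of its neighbors. -/
noncomputable def ldWeight {V : Type*} (G : SimpleGraph V) [Fintype V] (f : V → ℕ) (v : V) : ℕ :=
  ∑ x ∈ Finset.univ, if G.Adj v x then f x else 0

/-- `f` is a local distance antimagic labeling of `G`: a bijection onto `{1,…,|V|}`
with adjacent vertices getting distinct weights. -/
def IsLDAL {V : Type*} (G : SimpleGraph V) [Fintype V] (f : V → ℕ) : Prop :=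
  Set.BijOn f Set.univ (Set.Icc 1 (Fintype.card V)) ∧
    ∀ ⦃u v : V⦄, G.Adj u v → ldWeight G f u ≠ ldWeight G f v

/-- The local distance antimagic chromatic number: minimum number of distinct weights. -/
noncomputable def chiLD {V : Type*} (G : SimpleGraph V) [Fintype V] : ℕ :=
  sInf {k | ∃ f : V → ℕ, IsLDAL G f ∧ (Finset.univ.image (ldWeight G f)).card = k}

/-- The join `G + H` of two graphs. -/
def graphJoin {α β : Type*} (G : SimpleGraph α) (H : SimpleGraph β) :
    SimpleGraph (α ⊕ β) where
  Adj x y :=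
    match x, y with
    | Sum.inl a, Sum.inl b => G.Adj a b
    | Sum.inr a, Sum.inr b => H.Adj a b
    | Sum.inl _, Sum.inr _ => True
    | Sum.inr _, Sum.inl _ => True
  symm.symm := by
    rintro (a | a) (b | b) h
    exacts [G.adj_symm h, trivial, trivial, H.adj_symm h]
  loopless.irrefl := by
    rintro (a | a) h
    exacts [G.loopless.irrefl a h, H.loopless.irrefl a h]

/-- The lexicographic product `G[H]`. -/
def lexProd {α β : Type*} (G : SimpleGraph α) (H : SimpleGraph β) :
    SimpleGraph (α × β) where
  Adj x y := G.Adj x.1 y.1 ∨ (x.1 = y.1 ∧ H.Adj x.2 y.2)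
  symm.symm := by
    rintro x y (h | ⟨e, h⟩)
    exacts [Or.inl h.symm, Or.inr ⟨e.symm, h.symm⟩]
  loopless.irrefl := by
    rintro x (h | ⟨e, h⟩)
    exacts [G.loopless.irrefl _ h, H.loopless.irrefl _ h]

/-- The friendship graph `F_n`: `n` triangles sharing the central vertex `none`. -/
def friendship (n : ℕ) : SimpleGraph (Option (Fin n × Fin 2)) where
  Adj x y := x ≠ y ∧ (x = none ∨ y = none ∨ ∃ i a b, x = some (i, a) ∧ y = some (i, b))
  symm.symm := by
    rintro x y ⟨hne, h⟩
    refine ⟨hne.symm, ?_⟩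
    rcases h with h | h | ⟨i, a, b, hx, hy⟩
    · exact Or.inr (Or.inl h)
    · exact Or.inl h
    · exact Or.inr (Or.inr ⟨i, b, a, hy, hx⟩)
  loopless.irrefl := fun x h => h.1 rfl

/-- The bistar `B_{n,n}`: two adjacent centers, each with `n` leaves. -/
def bistar (n : ℕ) : SimpleGraph (Bool ⊕ Bool × Fin n) where
  Adj x y :=
    match x, y with
    | Sum.inl a, Sum.inl b => a ≠ b
    | Sum.inl a, Sum.inr (c, _) => a = c
    | Sum.inr (c, _), Sum.inl a => a = c
    | Sum.inr _, Sum.inr _ => False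
  symm.symm := by
    rintro (a | ⟨c, i⟩) (b | ⟨d, j⟩) h
    exacts [h.symm, h, h, h.elim]
  loopless.irrefl := by
    rintro (a | ⟨c, i⟩) h
    exacts [h rfl, h]

lemma lexAdj {α β : Type*} (G : SimpleGraph α) (a b : α) (i j : β) :
    (lexProd G (⊥ : SimpleGraph β)).Adj (a, i) (b, j) ↔ G.Adj a b := by
  simp [lexProd]

open Classical in
lemma weight_lex {V : Type*} [Fintype V] (G : SimpleGraph V) {n : ℕ}
    (f : V × Fin n → ℕ) (a : V) (i : Fin n) :
    ldWeight (lexProd G (⊥ : SimpleGraph (Fin n))) f (a, i)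
      = ∑ b : V, if G.Adj a b then (∑ j : Fin n, f (b, j)) else 0 := by
  classical
  unfold ldWeight
  rw [Fintype.sum_prod_type]
  refine Finset.sum_congr rfl fun b _ => ?_
  by_cases h : G.Adj a b
  · rw [if_pos h]
    refine Finset.sum_congr rfl fun j _ => ?_
    rw [if_pos ((lexAdj G a b i j).mpr h)]
  · rw [if_neg h]
    simp only [lexAdj G a b i, h, if_false, Finset.sum_const_zero]
-- endpoint of a maximal path: every neighbor is the second vertex
lemma leaf_of_maximal {V : Type*} {G : SimpleGraph V} (hac : G.IsAcyclic)
    {a b : V} (w : G.Walk a b) (hw : w.IsPath)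
    (hmax : ∀ (c d : V) (q : G.Walk c d), q.IsPath → q.length ≤ w.length) :
    ∀ p, G.Adj a p → p = w.getVert 1 := by
  classical
  intro p hp
  by_cases hmem : p ∈ w.support
  · have hq := hw.takeUntil hmem
    have huniq := (SimpleGraph.isAcyclic_iff_path_unique.mp hac)
      ⟨w.takeUntil p hmem, hq⟩ (SimpleGraph.Path.singleton hp)
    have hq1 : w.takeUntil p hmem = SimpleGraph.Walk.cons hp SimpleGraph.Walk.nil := by
      simpa [SimpleGraph.Path.singleton] using congrArg Subtype.val huniq
    have hspec := w.take_spec hmem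
    rw [hq1] at hspec
    rw [← hspec]
    simp [SimpleGraph.Walk.getVert_cons_succ]
  · exfalso
    have hcons : (SimpleGraph.Walk.cons hp.symm w).IsPath := hw.cons hmem
    have := hmax _ _ _ hcons
    simp [SimpleGraph.Walk.length_cons] at this

lemma adj_of_length_one {V : Type*} {G : SimpleGraph V} {u v : V} (q : G.Walk u v)
    (h : q.length = 1) : G.Adj u v := by
  have h0 : 0 < q.length := by omega
  have := q.adj_getVert_succ h0
  rwa [SimpleGraph.Walk.getVert_zero, show (0 + 1 : ℕ) = q.length from by omega,
    SimpleGraph.Walk.getVert_length] at this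

lemma walk2_decomp {V : Type*} {G : SimpleGraph V} {u v : V} (q : G.Walk u v)
    (hq : q.IsPath) (h : q.length = 2) :
    ∃ a, G.Adj u a ∧ G.Adj a v ∧ u ≠ a ∧ a ≠ v ∧ u ≠ v := by
  cases q with
  | nil => simp at h
  | cons h1 p1 =>
    cases p1 with
    | nil => simp at h
    | cons h2 p2 =>
      cases p2 with
      | nil =>
        refine ⟨_, h1, h2, h1.ne, h2.ne, ?_⟩
        simp [SimpleGraph.Walk.isPath_def] at hq
        tauto
      | cons h3 p3 => simp at h

lemma walk3_decomp {V : Type*} {G : SimpleGraph V} {a b : V} (w : G.Walk a b)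
    (hw : w.IsPath) (h3 : 3 ≤ w.length) :
    ∃ x y z, G.Adj a x ∧ G.Adj x y ∧ G.Adj y z ∧ x ≠ z ∧ w.getVert 1 = x := by
  cases w with
  | nil => simp at h3
  | cons h1 p1 =>
    cases p1 with
    | nil => simp at h3
    | cons h2 p2 =>
      cases p2 with
      | nil => simp at h3
      | cons hadj3 p3 =>
        rename_i x y z
        refine ⟨x, y, z, h1, h2, hadj3, ?_, by simp⟩
        have hnd := hw.support_nodup
        simp [List.nodup_cons] at hnd
        intro hxz
        exact hnd.2.1.2 (hxz ▸ p3.start_mem_support)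

lemma star_or_config {V : Type*} [Fintype V] {G : SimpleGraph V} (htree : G.IsTree)
    (hcard : 3 ≤ Fintype.card V) :
    (∃ c, ∀ v, v ≠ c → G.Adj c v) ∨
    (∃ u x y z : V, G.Adj u x ∧ G.Adj x y ∧ G.Adj y z ∧ x ≠ z ∧
      ∀ p, G.Adj u p → p = x) := by
  classical
  have hne : Nonempty V := Fintype.card_pos_iff.mp (by omega)
  obtain ⟨v0⟩ := hne
  set S : Set ℕ := {ℓ | ∃ (a b : V) (q : G.Walk a b), q.IsPath ∧ q.length = ℓ} with hS
  have hbdd : ∀ ℓ ∈ S, ℓ ≤ Fintype.card V := by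
    rintro ℓ ⟨a, b, q, hq, rfl⟩
    exact le_of_lt hq.length_lt
  have h0S : (0 : ℕ) ∈ S := ⟨v0, v0, SimpleGraph.Walk.nil, by simp, rfl⟩
  set L := sSup S with hLdef
  have hLS : L ∈ S := Nat.sSup_mem ⟨0, h0S⟩ ⟨Fintype.card V, fun y hy => hbdd y hy⟩
  have hmax : ∀ (c d : V) (q : G.Walk c d), q.IsPath → q.length ≤ L := by
    intro c d q hq
    exact le_csSup ⟨Fintype.card V, fun y hy => hbdd y hy⟩ ⟨c, d, q, hq, rfl⟩
  have hpath : ∀ u v : V, ∃ q : G.Walk u v, q.IsPath := by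
    intro u v
    obtain ⟨w⟩ := htree.isConnected.preconnected u v
    exact ⟨w.bypass, w.bypass_isPath⟩
  obtain ⟨a, b, w, hw, hwlen⟩ := hLS
  by_cases h3 : 3 ≤ L
  · right
    obtain ⟨x, y, z, h1, h2, hadj3, hxz, hgv⟩ := walk3_decomp w hw (hwlen ▸ h3)
    refine ⟨a, x, y, z, h1, h2, hadj3, hxz, fun p hp => ?_⟩
    have := leaf_of_maximal htree.IsAcyclic w hw
      (fun c d q hq => hwlen ▸ hmax c d q hq) p hp
    rw [this, hgv]
  · left
    push_neg at h3
    -- every pair of distinct vertices is NOT all-adjacent; get a path of length 2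
    have hnotall : ¬ ∀ u v : V, u ≠ v → G.Adj u v := by
      intro hall
      obtain ⟨q, hq⟩ := Fintype.exists_ne_of_one_lt_card (by omega) v0
      have hsub : ¬ (Finset.univ : Finset V) ⊆ {v0, q} := by
        intro hsub
        have hc := Finset.card_le_card hsub
        have h2 : ({v0, q} : Finset V).card ≤ 2 :=
          (Finset.card_insert_le _ _).trans (by simp)
        simp only [Finset.card_univ] at hc
        omega
      obtain ⟨r, -, hr⟩ := Finset.not_subset.mp hsub
      simp only [Finset.mem_insert, Finset.mem_singleton, not_or] at hr
      obtain ⟨hrv, hrq⟩ := hr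
      have p2p : (SimpleGraph.Walk.cons (hall _ _ (Ne.symm hq))
          (SimpleGraph.Walk.cons (hall _ _ (fun h => hrq h.symm)) SimpleGraph.Walk.nil)
            : G.Walk v0 r).IsPath := by
        rw [SimpleGraph.Walk.cons_isPath_iff, SimpleGraph.Walk.cons_isPath_iff]
        simp
        exact ⟨fun h => hrq h.symm, fun h => hq h.symm, fun h => hrv h.symm⟩
      have huniq := SimpleGraph.isAcyclic_iff_path_unique.mp htree.IsAcyclic
        (SimpleGraph.Path.singleton (hall _ _ (fun h => hrv h.symm))) ⟨_, p2p⟩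
      have hlen := congrArg (fun (p : G.Path v0 r) => p.val.length) huniq
      simp [SimpleGraph.Path.singleton] at hlen
    push_neg at hnotall
    obtain ⟨u, t, hut, hnadj⟩ := hnotall
    obtain ⟨q, hq⟩ := hpath u t
    have hql : q.length = 2 := by
      have hle := hmax _ _ _ hq
      have h0 : q.length ≠ 0 := fun h => hut (q.eq_of_length_eq_zero h)
      have hq1 : q.length ≠ 1 := fun h => hnadj (adj_of_length_one q h)
      omega
    obtain ⟨x, hux, hxt, hunx, hxnt, hunt⟩ := walk2_decomp q hq hql
    refine ⟨x, fun v hv => ?_⟩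
    obtain ⟨P, hP⟩ := hpath x v
    have hPle : P.length ≤ 2 := le_trans (hmax _ _ _ hP) (by omega)
    have hP0 : P.length ≠ 0 := fun h => hv (P.eq_of_length_eq_zero h).symm
    rcases Nat.lt_or_ge P.length 2 with hlt | hge
    · exact adj_of_length_one P (by omega)
    · have hPl : P.length = 2 := by omega
      obtain ⟨c, hxc, hcv, hxnc, hcnv, hxnv⟩ := walk2_decomp P hP hPl
      by_cases huv : u = v
      · exact huv ▸ hux.symm
      by_cases htv : t = v
      · exact htv ▸ hxt
      exfalso
      by_cases huc : u = c
      · have htc : t ≠ c := fun h => hunt (huc.trans h.symm)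
        have hw3 : (SimpleGraph.Walk.cons hxt.symm (SimpleGraph.Walk.cons hxc
            (SimpleGraph.Walk.cons hcv SimpleGraph.Walk.nil)) : G.Walk t v).IsPath := by
          rw [SimpleGraph.Walk.cons_isPath_iff, SimpleGraph.Walk.cons_isPath_iff,
            SimpleGraph.Walk.cons_isPath_iff]
          simp
          exact ⟨⟨hcnv, hxnc, hxnv⟩, fun h => hxnt h.symm, htc, htv⟩
        have hc3 := hmax _ _ _ hw3
        simp at hc3
        omega
      · have hw3 : (SimpleGraph.Walk.cons hux (SimpleGraph.Walk.cons hxc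
            (SimpleGraph.Walk.cons hcv SimpleGraph.Walk.nil)) : G.Walk u v).IsPath := by
          rw [SimpleGraph.Walk.cons_isPath_iff, SimpleGraph.Walk.cons_isPath_iff,
            SimpleGraph.Walk.cons_isPath_iff]
          simp
          exact ⟨⟨hcnv, hxnc, hxnv⟩, hunx, huc, huv⟩
        have hc3 := hmax _ _ _ hw3
        simp at hc3
        omega

lemma no_triangle {V : Type*} {G : SimpleGraph V} (hac : G.IsAcyclic) {u v c : V}
    (h1 : G.Adj u v) (h2 : G.Adj u c) (h3 : G.Adj c v) : False := by
  have hp2 : (SimpleGraph.Walk.cons h2 (SimpleGraph.Walk.cons h3 SimpleGraph.Walk.nil)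
      : G.Walk u v).IsPath := by
    rw [SimpleGraph.Walk.cons_isPath_iff, SimpleGraph.Walk.cons_isPath_iff]
    simp
    exact ⟨G.ne_of_adj h3, h2.ne, h1.ne⟩
  have huniq := SimpleGraph.isAcyclic_iff_path_unique.mp hac
    (SimpleGraph.Path.singleton h1) ⟨_, hp2⟩
  have hlen := congrArg (fun (p : G.Path u v) => p.val.length) huniq
  simp [SimpleGraph.Path.singleton] at hlen

lemma adj_iff_of_center {V : Type*} {G : SimpleGraph V} (hac : G.IsAcyclic)
    {c : V} (hc : ∀ v, v ≠ c → G.Adj c v) (u v : V) :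
    G.Adj u v ↔ ((u = c ∧ v ≠ c) ∨ (v = c ∧ u ≠ c)) := by
  constructor
  · intro h
    by_cases hu : u = c
    · exact Or.inl ⟨hu, fun hv => G.ne_of_adj h (by rw [hu, hv])⟩
    · by_cases hv : v = c
      · exact Or.inr ⟨hv, hu⟩
      · exact absurd ((hc u hu).symm) (fun h2 => no_triangle hac h h2 (hc v hv))
  · rintro (⟨rfl, hv⟩ | ⟨rfl, hu⟩)
    · exact hc v hv
    · exact (hc u hu).symm

lemma iso_of_center {V : Type*} [Fintype V] {G : SimpleGraph V} {m : ℕ}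
    (hac : G.IsAcyclic) (hm : Fintype.card V = m) (hm3 : 3 ≤ m)
    {c : V} (hc : ∀ v, v ≠ c → G.Adj c v) :
    Nonempty (G ≃g completeBipartiteGraph (Fin 1) (Fin (m - 1))) := by
  classical
  have hcnt : Fintype.card {v : V // ¬ v = c} = m - 1 := by
    rw [Fintype.card_subtype_compl, Fintype.card_subtype_eq, hm]
  let e2 : {v : V // ¬ v = c} ≃ Fin (m - 1) := Fintype.equivFinOfCardEq hcnt
  let E : V ≃ Fin 1 ⊕ Fin (m - 1) :=
    { toFun := fun v => if h : v = c then Sum.inl 0 else Sum.inr (e2 ⟨v, h⟩)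
      invFun := Sum.elim (fun _ => c) (fun j => (e2.symm j).1)
      left_inv := by
        intro v
        by_cases h : v = c
        · simp [h]
        · simp [h]
      right_inv := by
        rintro (i | j)
        · simp [Subsingleton.elim i 0]
        · have h := (e2.symm j).2
          simp [h] }
  refine ⟨⟨E, ?_⟩⟩
  intro u v
  show (completeBipartiteGraph (Fin 1) (Fin (m-1))).Adj (E u) (E v) ↔ G.Adj u v
  rw [adj_iff_of_center hac hc]
  by_cases hu : u = c <;> by_cases hv : v = c <;>
    simp [E, hu, hv, completeBipartiteGraph]

-- positivity of labels
lemma ldal_label_pos {V : Type*} [Fintype V] {G : SimpleGraph V} {f : V → ℕ}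
    (hf : IsLDAL G f) (v : V) : 1 ≤ f v :=
  (hf.1.mapsTo (Set.mem_univ v)).1

open Classical in
lemma center_weight {V : Type*} [Fintype V] (G : SimpleGraph V) {c : V}
    (F : V → ℕ) (hadj : ∀ b, G.Adj c b ↔ b ≠ c) :
    (∑ b : V, if G.Adj c b then F b else 0) = ∑ b ∈ Finset.univ.erase c, F b := by
  rw [← Finset.sum_erase (Finset.univ : Finset V)
    (by simp : (if G.Adj c c then F c else 0) = 0)]
  refine Finset.sum_congr rfl fun b hb => ?_
  rw [if_pos ((hadj b).mpr (Finset.ne_of_mem_erase hb))]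

open Classical in
lemma leaf_weight {V : Type*} [Fintype V] (G : SimpleGraph V) {a c : V}
    (F : V → ℕ) (hadj : ∀ b, G.Adj a b ↔ b = c) :
    (∑ b : V, if G.Adj a b then F b else 0) = F c := by
  rw [Finset.sum_eq_single c]
  · rw [if_pos ((hadj c).mpr rfl)]
  · intro b _ hbc
    rw [if_neg (fun h => hbc ((hadj b).mp h))]
  · intro h
    exact absurd (Finset.mem_univ c) h

theorem stmt_17 {V : Type*} [Fintype V] (G : SimpleGraph V) (n m : ℕ)
    (hn : 1 < n) (hm : 3 ≤ m) (hcard : Fintype.card V = m) (htree : G.IsTree) :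
    chiLD (lexProd G (⊥ : SimpleGraph (Fin n))) = 2 ↔
      Nonempty (G ≃g completeBipartiteGraph (Fin 1) (Fin (m - 1))) := by
  classical
  have i0 : Fin n := ⟨0, by omega⟩
  have hcardVn : Fintype.card (V × Fin n) = m * n := by
    simp [Fintype.card_prod, hcard]
  set S : Set ℕ := {k | ∃ f : V × Fin n → ℕ,
      IsLDAL (lexProd G (⊥ : SimpleGraph (Fin n))) f ∧
      (Finset.univ.image (ldWeight (lexProd G (⊥ : SimpleGraph (Fin n))) f)).card = k}
    with hS
  have hchi : chiLD (lexProd G (⊥ : SimpleGraph (Fin n))) = sInf S := rfl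
  constructor
  · -- forward direction
    intro h2
    rw [hchi] at h2
    have hSne : S.Nonempty := by
      by_contra hempty
      rw [Set.not_nonempty_iff_eq_empty] at hempty
      rw [hempty, Nat.sInf_empty] at h2
      omega
    have hmem := Nat.sInf_mem hSne
    rw [h2] at hmem
    obtain ⟨f, hf, hcard2⟩ := hmem
    rcases star_or_config htree (by omega) with ⟨c, hc⟩ | ⟨u, x, y, z, hux, hxy, hyz, hxz, hleaf⟩
    · exact iso_of_center htree.IsAcyclic hcard hm hc
    · exfalso
      set F : V → ℕ := fun b => ∑ j : Fin n, f (b, j) with hF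
      set W : V → ℕ := fun a => ∑ b : V, if G.Adj a b then F b else 0 with hWdef
      have hW : ∀ (a : V) (i : Fin n),
          ldWeight (lexProd G (⊥ : SimpleGraph (Fin n))) f (a, i) = W a :=
        fun a i => weight_lex G f a i
      have hFpos : ∀ b, 1 ≤ F b := by
        intro b
        calc (1 : ℕ) ≤ n := by omega
        _ = (Finset.univ : Finset (Fin n)).card • 1 := by simp
        _ ≤ ∑ j : Fin n, f (b, j) :=
          Finset.card_nsmul_le_sum _ _ _ (fun j _ => ldal_label_pos hf (b, j))
      have hWu : W u = F x :=
        leaf_weight G F (fun b => ⟨fun h => hleaf b h, fun h => h ▸ hux⟩)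
      have hWy : F x + F z ≤ W y := by
        calc F x + F z
            = ∑ b ∈ ({x, z} : Finset V), (if G.Adj y b then F b else 0) := by
              rw [Finset.sum_pair hxz, if_pos hxy.symm, if_pos hyz]
        _ ≤ W y := Finset.sum_le_sum_of_subset (Finset.subset_univ _)
      have hWux : W u ≠ W x := by
        have := hf.2 ((lexAdj G u x i0 i0).mpr hux)
        rwa [hW, hW] at this
      have hWyx : W y ≠ W x := by
        have := hf.2 ((lexAdj G y x i0 i0).mpr hxy.symm)
        rwa [hW, hW] at this
      have hWuy : W u ≠ W y := by
        have := hFpos z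
        omega
      have hsubs : ({W u, W x, W y} : Finset ℕ) ⊆
          Finset.univ.image (ldWeight (lexProd G (⊥ : SimpleGraph (Fin n))) f) := by
        intro k hk
        simp only [Finset.mem_insert, Finset.mem_singleton] at hk
        rcases hk with rfl | rfl | rfl
        · exact Finset.mem_image.mpr ⟨(u, i0), Finset.mem_univ _, hW u i0⟩
        · exact Finset.mem_image.mpr ⟨(x, i0), Finset.mem_univ _, hW x i0⟩
        · exact Finset.mem_image.mpr ⟨(y, i0), Finset.mem_univ _, hW y i0⟩
      have h3card : ({W u, W x, W y} : Finset ℕ).card = 3 := by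
        rw [Finset.card_insert_of_notMem (by simp [hWux, hWuy]),
          Finset.card_insert_of_notMem (by simp [hWyx.symm]), Finset.card_singleton]
      have hle := Finset.card_le_card hsubs
      rw [h3card, hcard2] at hle
      omega
  · -- backward direction
    rintro ⟨e⟩
    set c : V := e.symm (Sum.inl 0) with hc
    have hiso : ∀ u v : V, G.Adj u v ↔
        (completeBipartiteGraph (Fin 1) (Fin (m-1))).Adj (e u) (e v) :=
      fun u v => (e.map_rel_iff).symm
    have hlc : ∀ w : V, w = c ↔ ∃ i, e w = Sum.inl i := by
      intro w
      constructor
      · rintro rfl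
        exact ⟨0, e.apply_symm_apply _⟩
      · rintro ⟨i, hi⟩
        have h1 := congrArg e.symm hi
        rw [e.symm_apply_apply] at h1
        rw [h1, hc, Subsingleton.elim i 0]
    have hadj : ∀ u v : V, G.Adj u v ↔ ((u = c ∧ v ≠ c) ∨ (v = c ∧ u ≠ c)) := by
      intro u v
      rw [hiso u v]
      rcases hu : e u with i | i <;> rcases hv : e v with j | j <;>
        simp only [completeBipartiteGraph, Sum.isLeft_inl, Sum.isRight_inl,
          Sum.isLeft_inr, Sum.isRight_inr] <;>
        simp [hlc, hu, hv]
    have hadjc : ∀ b, G.Adj c b ↔ b ≠ c := by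
      intro b
      rw [hadj]
      constructor
      · rintro (⟨h1, h2⟩ | ⟨h1, h2⟩)
        · exact h2
        · exact absurd rfl h2
      · intro hbc
        exact Or.inl ⟨rfl, hbc⟩
    have hadja : ∀ a, a ≠ c → ∀ b, G.Adj a b ↔ b = c := by
      intro a hac b
      rw [hadj]
      constructor
      · rintro (⟨h1, h2⟩ | ⟨h1, h2⟩)
        · exact absurd h1 hac
        · exact h1
      · intro h
        exact Or.inr ⟨h, hac⟩
    obtain ⟨a0, ha0⟩ := Fintype.exists_ne_of_one_lt_card
      (by omega : 1 < Fintype.card V) c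
    have hm' : 1 + (m - 1) = m := by omega
    set g : V ≃ Fin m := e.toEquiv.trans (finSumFinEquiv.trans (finCongr hm')) with hg
    have hg0 : (g c).val = 0 := by
      simp [hg, hc, Equiv.trans_apply]
    have hgpos : ∀ a : V, a ≠ c → 1 ≤ (g a).val := by
      intro a hac
      have h1 : g a ≠ g c := fun h => hac (g.injective h)
      have h2 : (g a).val ≠ (g c).val := fun h => h1 (Fin.ext h)
      omega
    set f : V × Fin n → ℕ := fun p => (finProdFinEquiv (g p.1, p.2)).val + 1 with hfdef
    have hfval : ∀ (a : V) (j : Fin n), f (a, j) = j.val + n * (g a).val + 1 := by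
      intro a j
      simp [hfdef, finProdFinEquiv]
    set ε : V × Fin n ≃ Fin (m * n) :=
      (g.prodCongr (Equiv.refl (Fin n))).trans finProdFinEquiv with hε
    have hfε : ∀ p : V × Fin n, f p = (ε p).val + 1 := by
      rintro ⟨a, j⟩
      simp [hfdef, hε, Equiv.prodCongr_apply, Equiv.trans_apply]
    have hbij : Set.BijOn f Set.univ (Set.Icc 1 (Fintype.card (V × Fin n))) := by
      rw [hcardVn]
      refine ⟨fun p _ => ?_, fun p _ q _ hpq => ?_, fun k hk => ?_⟩
      · rw [hfε p]
        exact ⟨by omega, by have := (ε p).isLt; omega⟩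
      · rw [hfε p, hfε q] at hpq
        exact ε.injective (Fin.ext (by omega))
      · obtain ⟨hk1, hk2⟩ := hk
        refine ⟨ε.symm ⟨k - 1, by omega⟩, Set.mem_univ _, ?_⟩
        rw [hfε, ε.apply_symm_apply]
        simp only
        omega
    set F : V → ℕ := fun b => ∑ j : Fin n, f (b, j) with hF
    set W : V → ℕ := fun a => ∑ b : V, if G.Adj a b then F b else 0 with hWdef
    have hW : ∀ (a : V) (i : Fin n),
        ldWeight (lexProd G (⊥ : SimpleGraph (Fin n))) f (a, i) = W a :=
      fun a i => weight_lex G f a i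
    have hWc : W c = ∑ b ∈ Finset.univ.erase c, F b := center_weight G F hadjc
    have hWa : ∀ a, a ≠ c → W a = F c := fun a hac => leaf_weight G F (hadja a hac)
    have hFc_le : F c ≤ n * n := by
      calc F c ≤ (Finset.univ : Finset (Fin n)).card • n := by
            refine Finset.sum_le_card_nsmul _ _ _ (fun j _ => ?_)
            rw [hfval c j, hg0]
            have := j.isLt
            omega
      _ = n * n := by simp [mul_comm]
    have hFa_ge : ∀ a, a ≠ c → n * (n + 1) ≤ F a := by
      intro a hac
      calc n * (n + 1) = (Finset.univ : Finset (Fin n)).card • (n + 1) := by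
            simp [mul_comm]
      _ ≤ F a := by
            refine Finset.card_nsmul_le_sum _ _ _ (fun j _ => ?_)
            rw [hfval a j]
            have := hgpos a hac
            have : n * 1 ≤ n * (g a).val := Nat.mul_le_mul_left n this
            omega
    have hlt : F c < W c := by
      have hmem : a0 ∈ Finset.univ.erase c := Finset.mem_erase.mpr ⟨ha0, Finset.mem_univ _⟩
      have h1 : F a0 ≤ W c := hWc ▸ Finset.single_le_sum (fun i _ => Nat.zero_le _) hmem
      have h2 := hFa_ge a0 ha0
      have h3 : n * n < n * (n + 1) := by
        calc n * n < n * n + n := by omega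
        _ = n * (n + 1) := by ring
      omega
    have hldal : IsLDAL (lexProd G (⊥ : SimpleGraph (Fin n))) f := by
      refine ⟨hbij, ?_⟩
      rintro ⟨a, i⟩ ⟨b, j⟩ hpq
      rw [hW, hW]
      have hab : G.Adj a b := (lexAdj G a b i j).mp hpq
      rcases (hadj a b).mp hab with ⟨rfl, h2⟩ | ⟨rfl, h2⟩
      · rw [hWa b h2]
        omega
      · rw [hWa a h2]
        omega
    have himg : Finset.univ.image (ldWeight (lexProd G (⊥ : SimpleGraph (Fin n))) f)
        = {W c, F c} := by
      ext k
      simp only [Finset.mem_image, Finset.mem_univ, true_and, Finset.mem_insert,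
        Finset.mem_singleton]
      constructor
      · rintro ⟨⟨a, i⟩, -, rfl⟩
        rw [hW]
        by_cases h : a = c
        · subst h; exact Or.inl rfl
        · exact Or.inr (hWa a h)
      · rintro (rfl | rfl)
        · exact ⟨(c, i0), hW c i0⟩
        · exact ⟨(a0, i0), by rw [hW, hWa a0 ha0]⟩
    have hcard2 : (Finset.univ.image
        (ldWeight (lexProd G (⊥ : SimpleGraph (Fin n))) f)).card = 2 := by
      rw [himg, Finset.card_insert_of_notMem (by simp; omega), Finset.card_singleton]
    rw [hchi]
    refine le_antisymm (Nat.sInf_le ⟨f, hldal, hcard2⟩) ?_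
    refine le_csInf ⟨2, f, hldal, hcard2⟩ ?_
    rintro k ⟨f', hf', rfl⟩
    have hadj0 : (lexProd G (⊥ : SimpleGraph (Fin n))).Adj (c, i0) (a0, i0) :=
      (lexAdj G c a0 i0 i0).mpr ((hadjc a0).mpr ha0)
    have hne := hf'.2 hadj0
    have : 1 < (Finset.univ.image
        (ldWeight (lexProd G (⊥ : SimpleGraph (Fin n))) f')).card := by
      refine Finset.one_lt_card.mpr ?_
      exact ⟨_, Finset.mem_image.mpr ⟨(c, i0), Finset.mem_univ _, rfl⟩,
        _, Finset.mem_image.mpr ⟨(a0, i0), Finset.mem_univ _, rfl⟩, hne⟩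
    omega
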